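/- Let τ and τ̂ be measurable real-valued functions of a random variable X, h* = 1(τ > 0), ĥ* = 1(τ̂ > 0). Suppose the margin condition P[|τ(X)| ≤ t] ≤ C t^a holds for all t ≥ 0 with constants C > 0, a > 0. Then E[|ĥ*(X) - h*(X)| · |τ(X)|] ≤ C' ‖τ̂ - τ‖_∞^{1+a} for some constant C' depending only on C and a. -/

import Mathlib

open MeasureTheory

/-- under the margin condition `P[|τ(X)| ≤ t] ≤ C t^a`, with
`h* = 1(τ > 0)`, `ĥ* = 1(τ̂ > 0)`, and `T ≥ ‖τ̂ - τ‖_∞` (essential sup bound),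
`E[|ĥ*(X) - h*(X)| |τ(X)|] ≤ C T^{1+a}` (so the constant depends only on `C, a`). -/
theorem stmt_7 {Ω 𝒳 : Type*} [MeasurableSpace Ω] [MeasurableSpace 𝒳]
    (P : Measure Ω) [IsProbabilityMeasure P]
    (X : Ω → 𝒳) (hX : Measurable X)
    (τ τh : 𝒳 → ℝ) (hτ : Measurable τ) (hτh : Measurable τh)
    (hint : Integrable (fun ω => τ (X ω)) P)
    (C a : ℝ) (hC : 0 < C) (ha : 0 < a)
    (hmargin : ∀ t ≥ (0 : ℝ), (P {ω | |τ (X ω)| ≤ t}).toReal ≤ C * t ^ a)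
    (T : ℝ) (hT : 0 ≤ T) (hTbound : ∀ᵐ ω ∂P, |τh (X ω) - τ (X ω)| ≤ T) :
    (∫ ω, |(if 0 < τh (X ω) then (1 : ℝ) else 0) - (if 0 < τ (X ω) then (1 : ℝ) else 0)|
        * |τ (X ω)| ∂P)
      ≤ C * T ^ (1 + a) := by
  set S : Set Ω := {ω | |τ (X ω)| ≤ T} with hS
  have hSm : MeasurableSet S := measurableSet_le (hτ.comp hX).abs measurable_const
  set f : Ω → ℝ := fun ω =>
    |(if 0 < τh (X ω) then (1 : ℝ) else 0) - (if 0 < τ (X ω) then (1 : ℝ) else 0)|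
      * |τ (X ω)| with hf
  have hfm : Measurable f := by
    apply Measurable.mul
    · exact (Measurable.sub
        (Measurable.ite (measurableSet_lt measurable_const (hτh.comp hX))
          measurable_const measurable_const)
        (Measurable.ite (measurableSet_lt measurable_const (hτ.comp hX))
          measurable_const measurable_const)).abs
    · exact (hτ.comp hX).abs
  have hfint : Integrable f P := by
    refine hint.mono hfm.aestronglyMeasurable (Filter.Eventually.of_forall fun ω => ?_)
    have h1 : |(if 0 < τh (X ω) then (1 : ℝ) else 0) - (if 0 < τ (X ω) then (1 : ℝ) else 0)| ≤ 1 := by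
      by_cases h1 : 0 < τh (X ω) <;> by_cases h2 : 0 < τ (X ω) <;> simp [h1, h2]
    simp only [hf, Real.norm_eq_abs, abs_abs, abs_mul]
    calc |(if 0 < τh (X ω) then (1 : ℝ) else 0) - (if 0 < τ (X ω) then (1 : ℝ) else 0)| * |τ (X ω)|
        ≤ 1 * |τ (X ω)| := mul_le_mul_of_nonneg_right h1 (abs_nonneg _)
      _ = |τ (X ω)| := one_mul _
  have hpt : ∀ᵐ ω ∂P, f ω ≤ S.indicator (fun _ => T) ω := by
    filter_upwards [hTbound] with ω hω
    by_cases hd : (if 0 < τh (X ω) then (1 : ℝ) else 0) = (if 0 < τ (X ω) then (1 : ℝ) else 0)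
    · have : f ω = 0 := by simp [hf, hd]
      rw [this]
      exact Set.indicator_nonneg (fun _ _ => hT) ω
    · have hτT : |τ (X ω)| ≤ T := by
        by_cases h1 : 0 < τh (X ω) <;> by_cases h2 : 0 < τ (X ω)
        · simp [h1, h2] at hd
        · have : |τ (X ω)| ≤ |τh (X ω) - τ (X ω)| := by
            rw [abs_of_nonpos (not_lt.mp h2)]
            calc -τ (X ω) ≤ τh (X ω) - τ (X ω) := by linarith
              _ ≤ |τh (X ω) - τ (X ω)| := le_abs_self _
          linarith
        · have : |τ (X ω)| ≤ |τh (X ω) - τ (X ω)| := by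
            rw [abs_of_pos h2]
            calc τ (X ω) ≤ τ (X ω) - τh (X ω) := by linarith [not_lt.mp h1]
              _ ≤ |τ (X ω) - τh (X ω)| := le_abs_self _
              _ = |τh (X ω) - τ (X ω)| := abs_sub_comm _ _
          linarith
        · simp [h1, h2] at hd
      have hωS : ω ∈ S := hτT
      rw [Set.indicator_of_mem hωS]
      have h1 : |(if 0 < τh (X ω) then (1 : ℝ) else 0) - (if 0 < τ (X ω) then (1 : ℝ) else 0)| ≤ 1 := by
        by_cases h1 : 0 < τh (X ω) <;> by_cases h2 : 0 < τ (X ω) <;> simp [h1, h2]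
      calc f ω ≤ 1 * |τ (X ω)| := mul_le_mul_of_nonneg_right h1 (abs_nonneg _)
        _ = |τ (X ω)| := one_mul _
        _ ≤ T := hτT
  have hgint : Integrable (S.indicator (fun _ => T)) P :=
    (integrable_const T).indicator hSm
  have h1 : ∫ ω, f ω ∂P ≤ ∫ ω, S.indicator (fun _ => T) ω ∂P :=
    integral_mono_ae hfint hgint hpt
  have h2 : ∫ ω, S.indicator (fun _ => T) ω ∂P = (P S).toReal * T := by
    rw [integral_indicator_const _ hSm]; simp [smul_eq_mul, measureReal_def]
  have h3 : (P S).toReal * T ≤ (C * T ^ a) * T :=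
    mul_le_mul_of_nonneg_right (hmargin T hT) hT
  have h4 : (C * T ^ a) * T = C * T ^ (1 + a) := by
    rw [Real.rpow_add' hT (by positivity), Real.rpow_one]
    ring
  linarith
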